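/- Let ε ∈ (0,1), δ ∈ (0, ε/2), and let K, L ⊂ ℝⁿ be ε-smooth convex bodies with d_H(K,L) ≤ δ. Then the map G : Nor K → Nor L between normal bundles, (x,u) ↦ (p(x), u_L(p(x))) where p(x) is the nearest point on ∂L, satisfies |G(x,u) − (x,u)| ≤ δ + 2√(δ/ε) for all (x,u) ∈ Nor K. -/

import Mathlib

open Metric Set Pointwise
open scoped RealInnerProductSpace Topology

lemma seg_cross {E : Type*} [NormedAddCommGroup E] [NormedSpace ℝ E] {L : Set E}
    (hL : IsClosed L) {a b : E} (ha : a ∈ L) (hb : b ∉ L) :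
    ∃ z ∈ frontier L, dist a z ≤ dist a b ∧ dist b z ≤ dist a b := by
  set f : ℝ → E := fun t => a + t • (b - a) with hf
  have hfc : Continuous f := by continuity
  set S : Set ℝ := Icc (0:ℝ) 1 ∩ f ⁻¹' L with hS
  have hScomp : IsCompact S := isCompact_Icc.inter_right (hL.preimage hfc)
  have hSne : S.Nonempty := ⟨0, ⟨le_refl _, zero_le_one⟩, by simp [f, ha]⟩
  set t₀ : ℝ := sSup S with ht₀def
  have ht₀S : t₀ ∈ S := hScomp.sSup_mem hSne
  obtain ⟨⟨ht₀0, ht₀1⟩, ht₀L⟩ := ht₀S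
  have hf1 : f 1 = b := by simp [f]
  have ht₀lt1 : t₀ < 1 := lt_of_le_of_ne ht₀1 (fun h => hb (by rw [← hf1, ← h]; exact ht₀L))
  have hnot : ∀ t ∈ Ioc t₀ 1, f t ∉ L := by
    intro t ht hft
    exact absurd (le_csSup hScomp.bddAbove ⟨⟨ht₀0.trans ht.1.le, ht.2⟩, hft⟩) (not_le.2 ht.1)
  have hne : (𝓝[Ioc t₀ 1] t₀).NeBot := by
    rw [← mem_closure_iff_nhdsWithin_neBot, closure_Ioc ht₀lt1.ne]
    exact ⟨le_refl _, ht₀lt1.le⟩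
  have hmem_cl : f t₀ ∈ closure Lᶜ := by
    refine mem_closure_of_tendsto (hfc.continuousAt.continuousWithinAt (s := Ioc t₀ 1)) ?_
    exact Filter.eventually_of_mem self_mem_nhdsWithin (fun t ht => hnot t ht)
  have hfront : f t₀ ∈ frontier L := by
    refine ⟨subset_closure ht₀L, ?_⟩
    rw [closure_compl] at hmem_cl
    exact hmem_cl
  refine ⟨f t₀, hfront, ?_, ?_⟩
  · have : dist a (f t₀) = t₀ * ‖b - a‖ := by
      simp [f, dist_eq_norm, norm_smul, abs_of_nonneg ht₀0]
    rw [this, dist_eq_norm]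
    nlinarith [norm_nonneg (b - a), norm_sub_rev a b]
  · have : dist b (f t₀) = (1 - t₀) * ‖b - a‖ := by
      have : b - (a + t₀ • (b - a)) = (1 - t₀) • (b - a) := by
        rw [sub_smul, one_smul]; abel
      simp [f, dist_eq_norm, this, norm_smul, abs_of_nonneg (by linarith : (0:ℝ) ≤ 1 - t₀)]
    rw [this, dist_eq_norm]
    nlinarith [norm_nonneg (b - a), norm_sub_rev a b]

set_option maxHeartbeats 800000 in
/-- For ε-smooth convex bodies K, L with Hausdorff distance at most δ < ε/2, the map
G : Nor K → Nor L, (x, u_K(x)) ↦ (p(x), u_L(p(x))), moves every point of the normal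
bundle of K (a subset of ℝ^{2n} with the Euclidean norm) by at most δ + 2√(δ/ε). -/
theorem normal_bundle_map_displacement
    (n : ℕ) (ε δ : ℝ) (hε : ε ∈ Set.Ioo (0:ℝ) 1) (hδ : δ ∈ Set.Ioo (0:ℝ) (ε/2))
    (K L : Set (EuclideanSpace ℝ (Fin n)))
    (hKsmooth : ∃ K' : Set (EuclideanSpace ℝ (Fin n)), K'.Nonempty ∧ IsCompact K' ∧
      Convex ℝ K' ∧ K = K' + closedBall (0 : EuclideanSpace ℝ (Fin n)) ε)
    (hLsmooth : ∃ L' : Set (EuclideanSpace ℝ (Fin n)), L'.Nonempty ∧ IsCompact L' ∧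
      Convex ℝ L' ∧ L = L' + closedBall (0 : EuclideanSpace ℝ (Fin n)) ε)
    (hd : hausdorffDist K L ≤ δ)
    (p : EuclideanSpace ℝ (Fin n) → EuclideanSpace ℝ (Fin n))
    (hp : ∀ x ∈ frontier K, p x ∈ frontier L ∧ dist x (p x) = infDist x (frontier L))
    (uK uL : EuclideanSpace ℝ (Fin n) → EuclideanSpace ℝ (Fin n))
    (huK_unit : ∀ x ∈ frontier K, ‖uK x‖ = 1)
    (huK_normal : ∀ x ∈ frontier K, ∀ y ∈ K, ⟪y - x, uK x⟫ ≤ 0)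
    (huL_unit : ∀ x ∈ frontier L, ‖uL x‖ = 1)
    (huL_normal : ∀ x ∈ frontier L, ∀ y ∈ L, ⟪y - x, uL x⟫ ≤ 0) :
    ∀ x ∈ frontier K,
      Real.sqrt (‖p x - x‖ ^ 2 + ‖uL (p x) - uK x‖ ^ 2) ≤ δ + 2 * Real.sqrt (δ / ε) := by
  obtain ⟨hε0, hε1⟩ := hε
  obtain ⟨hδ0, hδε⟩ := hδ
  obtain ⟨K', hK'ne, hK'c, -, hKeq⟩ := hKsmooth
  obtain ⟨L', hL'ne, hL'c, -, hLeq⟩ := hLsmooth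
  have hball : IsCompact (closedBall (0 : EuclideanSpace ℝ (Fin n)) ε) := isCompact_closedBall _ _
  have hKcomp : IsCompact K := hKeq ▸ hK'c.add hball
  have hLcomp : IsCompact L := hLeq ▸ hL'c.add hball
  have hKne : K.Nonempty := by
    obtain ⟨k, hk⟩ := hK'ne
    exact hKeq ▸ ⟨k + 0, Set.add_mem_add hk (mem_closedBall_self hε0.le)⟩
  have hLne : L.Nonempty := by
    obtain ⟨l, hl⟩ := hL'ne
    exact hLeq ▸ ⟨l + 0, Set.add_mem_add hl (mem_closedBall_self hε0.le)⟩
  have hKcl : IsClosed K := hKcomp.isClosed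
  have hLcl : IsClosed L := hLcomp.isClosed
  have hedist : EMetric.hausdorffEdist K L ≠ ⊤ :=
    hausdorffEdist_ne_top_of_nonempty_of_bounded hKne hLne hKcomp.isBounded hLcomp.isBounded
  have hedist' : EMetric.hausdorffEdist L K ≠ ⊤ := by
    unfold EMetric.hausdorffEdist at hedist ⊢; rwa [hausdorffEDist_comm] at hedist
  intro x hx
  have hxK : x ∈ K := hKcl.frontier_subset hx
  set u := uK x with hu
  have hu1 : ‖u‖ = 1 := huK_unit x hx
  -- Part A : dist x (p x) ≤ δ
  have hA : dist x (p x) ≤ δ := by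
    rw [(hp x hx).2]
    by_contra hcon
    push_neg at hcon
    set r := infDist x (frontier L) with hr
    set t := (δ + r) / 2 with ht
    have hδt : δ < t := by rw [ht]; linarith
    have htr : t < r := by rw [ht]; linarith
    have ht0 : 0 < t := lt_trans hδ0 hδt
    by_cases hxL : x ∈ L
    · -- x deep inside L : push along outer normal of K
      set q := x + t • u with hq
      have hdxq : dist x q = t := by
        simp [hq, dist_eq_norm, norm_smul, abs_of_pos ht0, hu1]
      have hqL : q ∈ L := by
        by_contra hqL
        obtain ⟨z, hz, hz1, -⟩ := seg_cross hLcl hxL hqL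
        have : r ≤ dist x z := infDist_le_dist_of_mem hz
        rw [hdxq] at hz1
        linarith
      have hinf : infDist q K < t := by
        have h := infDist_le_hausdorffDist_of_mem hqL hedist'
        rw [hausdorffDist_comm] at h
        linarith
      obtain ⟨y, hyK, hyq⟩ := (infDist_lt_iff hKne).mp hinf
      have h1 : ⟪y - x, u⟫ ≤ 0 := huK_normal x hx y hyK
      have h2 : ⟪q - x, u⟫ = t := by
        have hqx : q - x = t • u := by rw [hq]; abel
        rw [hqx, real_inner_smul_left, real_inner_self_eq_norm_sq, hu1]
        norm_num
      have h3 : |⟪y - q, u⟫| ≤ ‖y - q‖ * ‖u‖ := abs_real_inner_le_norm _ _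
      have h4 : ‖y - q‖ < t := by rw [← dist_eq_norm']; exact hyq
      have h5 : ⟪y - x, u⟫ = ⟪y - q, u⟫ + ⟪q - x, u⟫ := by
        rw [← inner_add_left]; congr 1; abel
      rw [hu1, mul_one] at h3
      have := abs_le.mp h3
      linarith [h5, h2, this.1]
    · -- x outside L : go to a nearby point of L and cross the frontier
      have hinf : infDist x L < t := by
        have h := infDist_le_hausdorffDist_of_mem hxK hedist
        linarith
      obtain ⟨y, hyL, hxy⟩ := (infDist_lt_iff hLne).mp hinf
      obtain ⟨z, hz, -, hz2⟩ := seg_cross hLcl hyL hxL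
      have : r ≤ dist x z := infDist_le_dist_of_mem hz
      rw [dist_comm y x] at hz2
      linarith
  -- Part B : ‖uL (p x) - u‖ ^ 2 ≤ 4 * (δ / ε)
  have hqfr : p x ∈ frontier L := (hp x hx).1
  set q := p x with hqdef
  set v := uL q with hv
  have hv1 : ‖v‖ = 1 := huL_unit q hqfr
  have hqL : q ∈ L := hLcl.frontier_subset hqfr
  have hB : ‖v - u‖ ^ 2 ≤ 4 * (δ / ε) := by
    -- find the center of the inner ball of L at q
    rw [hLeq] at hqL
    rw [Set.mem_add] at hqL
    obtain ⟨l', hl', b, hb, hlbq⟩ := hqL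
    have hbε : ‖b‖ ≤ ε := by simpa [dist_eq_norm] using mem_closedBall.mp hb
    have hεv : l' + ε • v ∈ L := by
      rw [hLeq]
      exact Set.add_mem_add hl' (by simp [norm_smul, abs_of_pos hε0, hv1, hε0.le])
    have h6 : ⟪l' + ε • v - q, v⟫ ≤ 0 := huL_normal q hqfr _ hεv
    have h7 : ⟪l' - q, v⟫ + ε ≤ 0 := by
      have : l' + ε • v - q = (l' - q) + ε • v := by abel
      rw [this, inner_add_left, real_inner_smul_left, real_inner_self_eq_norm_sq, hv1] at h6
      simpa using h6
    have hqb : q - l' = b := by rw [← hlbq]; abel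
    have h8 : ε ≤ ⟪b, v⟫ := by
      have : ⟪q - l', v⟫ = -⟪l' - q, v⟫ := by rw [← inner_neg_left]; congr 1; abel
      rw [hqb] at this
      linarith [this]
    have h9 : ⟪b, v⟫ ≤ ‖b‖ := by
      have := real_inner_le_norm b v
      rwa [hv1, mul_one] at this
    have hbeq : ‖b‖ = ε := le_antisymm hbε (le_trans h8 h9)
    have hCS : ⟪b, v⟫ = ‖b‖ * ‖v‖ := by
      rw [hbeq, hv1, mul_one]
      linarith
    have hbv : b = ε • v := by
      have := inner_eq_norm_mul_iff_real.mp hCS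
      rw [hv1, one_smul, hbeq] at this
      exact this
    -- the point w = q - ε v + ε u lies in L
    have hl'eq : l' = q - ε • v := by rw [← hlbq, hbv]; abel
    set w := q - ε • v + ε • u with hw
    have hwL : w ∈ L := by
      rw [hLeq, hw, ← hl'eq]
      exact Set.add_mem_add hl' (by simp [norm_smul, abs_of_pos hε0, hu1, hε0.le])
    -- key inner product bound : ⟪w - x, u⟫ ≤ δ
    have hkey : ⟪w - x, u⟫ ≤ δ := by
      refine le_of_forall_pos_le_add (fun η hη => ?_)
      have hinf : infDist w K < δ + η := by
        have h := infDist_le_hausdorffDist_of_mem hwL hedist'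
        rw [hausdorffDist_comm] at h
        linarith
      obtain ⟨y, hyK, hwy⟩ := (infDist_lt_iff hKne).mp hinf
      have h1 : ⟪y - x, u⟫ ≤ 0 := huK_normal x hx y hyK
      have h2 : ⟪w - x, u⟫ = ⟪w - y, u⟫ + ⟪y - x, u⟫ := by
        rw [← inner_add_left]; congr 1; abel
      have h3 : ⟪w - y, u⟫ ≤ ‖w - y‖ * ‖u‖ := real_inner_le_norm _ _
      rw [hu1, mul_one] at h3
      have h4 : ‖w - y‖ < δ + η := by rw [← dist_eq_norm]; exact hwy
      linarith
    -- expand the inner product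
    have hexp : ⟪w - x, u⟫ = ⟪q - x, u⟫ + ε - ε * ⟪v, u⟫ := by
      have : w - x = (q - x) + ε • u - ε • v := by rw [hw]; abel
      rw [this, inner_sub_left, inner_add_left, real_inner_smul_left, real_inner_smul_left,
        real_inner_self_eq_norm_sq, hu1]
      ring
    have hqx : |⟪q - x, u⟫| ≤ δ := by
      have := abs_real_inner_le_norm (q - x) u
      rw [hu1, mul_one] at this
      have hn : ‖q - x‖ ≤ δ := by rw [← dist_eq_norm, dist_comm]; exact hA
      linarith
    have hvu : ε - 2 * δ ≤ ε * ⟪v, u⟫ := by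
      have := abs_le.mp hqx
      linarith [hexp, hkey, this.1]
    rw [← mul_div_assoc, le_div_iff₀ hε0]
    have hnorm : ‖v - u‖ ^ 2 = 2 - 2 * ⟪v, u⟫ := by
      rw [norm_sub_sq_real, hv1, hu1]; ring
    rw [hnorm]
    nlinarith [hvu]
  -- combine
  have ha0 : 0 ≤ ‖p x - x‖ := norm_nonneg _
  have haδ : ‖p x - x‖ ≤ δ := by rw [← dist_eq_norm, dist_comm]; exact hA
  set s := Real.sqrt (δ / ε) with hs
  have hs0 : 0 ≤ s := Real.sqrt_nonneg _
  have hs2 : s ^ 2 = δ / ε := Real.sq_sqrt (div_nonneg hδ0.le hε0.le)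
  have hsum : ‖p x - x‖ ^ 2 + ‖uL (p x) - uK x‖ ^ 2 ≤ (δ + 2 * s) ^ 2 := by
    have h1 : ‖p x - x‖ ^ 2 ≤ δ ^ 2 := pow_le_pow_left₀ ha0 haδ 2
    have h2 : ‖uL (p x) - uK x‖ ^ 2 ≤ 4 * s ^ 2 := by rw [hs2]; exact hB
    have h3 : (0:ℝ) ≤ 4 * (δ * s) := by positivity
    have h4 : (δ + 2 * s) ^ 2 = δ ^ 2 + 4 * (δ * s) + 4 * s ^ 2 := by ring
    linarith
  calc Real.sqrt (‖p x - x‖ ^ 2 + ‖uL (p x) - uK x‖ ^ 2)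
      ≤ Real.sqrt ((δ + 2 * s) ^ 2) := Real.sqrt_le_sqrt hsum
    _ = δ + 2 * s := Real.sqrt_sq (by positivity)
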